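/- Let H ≤ Γ be countable groups, let H act on a countable set Y, and let Γ ↷ X be the induced action. Let (Σ_ε)_{ε∈E} be a family of subgroups of H each acting freely on Y. If for every g ∈ Γ \ H one has gHg⁻¹ ∩ H ⊆ ⋃_{ε∈E, s∈H} sΣ_εs⁻¹, then for every h ∈ H with Fix_Y(h) = ∅ one has Fix_X(h) = ∅. -/

import Mathlib

/-- `C` is a Følner sequence for the action of `G` on `X` given by `π`. -/
def IsFolnerSeq {G X : Type*} [Group G] (π : G →* Equiv.Perm X) (C : ℕ → Set X) : Prop :=
  (∀ n, (C n).Finite ∧ (C n).Nonempty) ∧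
    ∀ g : G, Filter.Tendsto
      (fun n => ((symmDiff (C n) (π g '' C n)).ncard : ℝ) / (C n).ncard)
      Filter.atTop (nhds 0)

/-- The action of `G` on `X` given by `π` is amenable (admits a Følner sequence). -/
def IsAmenableAction {G X : Type*} [Group G] (π : G →* Equiv.Perm X) : Prop :=
  ∃ C : ℕ → Set X, IsFolnerSeq π C

/-- The action given by `π` has infinite orbits. -/
def HasInfiniteOrbits {G X : Type*} [Group G] (π : G →* Equiv.Perm X) : Prop :=
  ∀ x : X, {y : X | ∃ g : G, π g x = y}.Infinite

/-- The action given by `π` is transitive. -/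
def IsTransitiveAction {G X : Type*} [Group G] (π : G →* Equiv.Perm X) : Prop :=
  ∀ x y : X, ∃ g : G, π g x = y

/-- The action given by `π` is almost free: every non-trivial element has finitely many
fixed points. -/
def IsAlmostFreeAction {G X : Type*} [Group G] (π : G →* Equiv.Perm X) : Prop :=
  ∀ g : G, g ≠ 1 → {x : X | π g x = x}.Finite

/-- The class 𝒜 of countable groups admitting a faithful, transitive and amenable action
on an infinite countable set. -/
def InClassA (G : Type*) [Group G] : Prop :=
  ∃ (X : Type) (_ : Countable X) (_ : Infinite X) (π : G →* Equiv.Perm X),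
    Function.Injective π ∧ IsTransitiveAction π ∧ IsAmenableAction π

/-- The class 𝒜_ℱ of countable groups admitting an amenable, almost free action with
infinite orbits on a countable set. -/
def InClassAF (G : Type*) [Group G] : Prop :=
  ∃ (X : Type) (_ : Countable X) (π : G →* Equiv.Perm X),
    IsAmenableAction π ∧ IsAlmostFreeAction π ∧ HasInfiniteOrbits π
section InducedAction

variable {Γ : Type*} [Group Γ] (H : Subgroup Γ) {Y : Type*} (π : H →* Equiv.Perm Y)

/-- The equivalence relation on `Y × Γ` given by the diagonal `H`-action
`h • (y, g) = (h • y, h * g)`. -/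
def indSetoid : Setoid (Y × Γ) where
  r p q := ∃ h : H, π h p.1 = q.1 ∧ (h : Γ) * p.2 = q.2
  iseqv := by
    constructor
    · intro p
      exact ⟨1, by simp, by simp⟩
    · rintro p q ⟨h, h1, h2⟩
      refine ⟨h⁻¹, ?_, ?_⟩
      · rw [← h1]; simp
      · rw [← h2]; simp [mul_assoc]
    · rintro p q r ⟨h, h1, h2⟩ ⟨k, k1, k2⟩
      refine ⟨k * h, ?_, ?_⟩
      · rw [← k1, ← h1]; simp
      · rw [← k2, ← h2]; simp [mul_assoc]

/-- The underlying set `X = H \ (Y × Γ)` of the induced action. -/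
def IndSpace : Type _ := Quotient (indSetoid H π)

/-- The induced action of `Γ` on `X = H \ (Y × Γ)`, given by `γ • [y, g] = [y, g * γ⁻¹]`. -/
def indHom : Γ →* Equiv.Perm (IndSpace H π) where
  toFun γ :=
    { toFun := Quotient.map' (fun p => (p.1, p.2 * γ⁻¹))
        (by rintro p q ⟨h, h1, h2⟩; exact ⟨h, h1, by show (h : Γ) * (p.2 * _) = q.2 * _; rw [← h2, mul_assoc]⟩)
      invFun := Quotient.map' (fun p => (p.1, p.2 * γ))
        (by rintro p q ⟨h, h1, h2⟩; exact ⟨h, h1, by show (h : Γ) * (p.2 * _) = q.2 * _; rw [← h2, mul_assoc]⟩)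
      left_inv := by
        intro x
        induction x using Quotient.inductionOn' with
        | h p => simp [Quotient.map'_mk'', mul_assoc]; rfl
      right_inv := by
        intro x
        induction x using Quotient.inductionOn' with
        | h p => simp [Quotient.map'_mk'', mul_assoc]; rfl }
  map_one' := by
    apply Equiv.ext
    intro x
    induction x using Quotient.inductionOn' with
    | h p => exact congrArg Quotient.mk'' (by simp)
  map_mul' γ₁ γ₂ := by
    apply Equiv.ext
    intro x
    induction x using Quotient.inductionOn' with
    | h p => exact congrArg Quotient.mk'' (by simp [mul_assoc])

end InducedAction

/-- **Lemma 2.5 (5).**  Let `H ≤ Γ` be countable groups, `H ↷ Y` an action on a countable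
set and `Γ ↷ X` the induced action.  Let `(Σ ε)_{ε ∈ E}` be a family of subgroups of `H`
each acting freely on `Y`.  If for every `g ∈ Γ \ H` one has
`gHg⁻¹ ∩ H ⊆ ⋃_{ε ∈ E, s ∈ H} s (Σ ε) s⁻¹`, then every `h ∈ H` with no fixed point in
`Y` has no fixed point in `X`. -/
theorem induced_action_no_fixed_points
    {Γ Y : Type*} [Group Γ] [Countable Γ] [Countable Y]
    (H : Subgroup Γ) (π : H →* Equiv.Perm Y)
    {E : Type*} (Sig : E → Subgroup Γ) (hsub : ∀ ε, Sig ε ≤ H)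
    (hfree : ∀ (ε : E) (h : H), (h : Γ) ∈ Sig ε → h ≠ 1 → ∀ y : Y, π h y ≠ y)
    (hcond : ∀ g : Γ, g ∉ H → ∀ x : Γ, x ∈ H → g⁻¹ * x * g ∈ H →
       ∃ (ε : E) (s : Γ), s ∈ H ∧ s⁻¹ * x * s ∈ Sig ε) :
    ∀ h : H, (∀ y : Y, π h y ≠ y) →
      ∀ x : IndSpace H π, indHom H π (h : Γ) x ≠ x := by
  intro h hh x hx
  induction x using Quotient.inductionOn' with
  | h p =>
    obtain ⟨y, g⟩ := p
    have hx' : (Quotient.mk'' (y, g * (h : Γ)⁻¹) : IndSpace H π) = Quotient.mk'' (y, g) := hx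
    obtain ⟨k, hk1, hk2⟩ := Quotient.exact' hx'
    simp only at hk1 hk2
    -- hk2 : (k : Γ) * (g * (h:Γ)⁻¹) = g
    have hkval : (k : Γ) = g * (h : Γ) * g⁻¹ := by
      have : (k : Γ) * (g * (h : Γ)⁻¹) * ((h : Γ) * g⁻¹) = g * ((h : Γ) * g⁻¹) := by rw [hk2]
      simpa [mul_assoc] using this
    by_cases hg : g ∈ H
    · -- then h fixes π ⟨g,hg⟩⁻¹ y
      have hkH : k = ⟨g, hg⟩ * h * ⟨g, hg⟩⁻¹ := by
        ext; simpa using hkval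
      apply hh (π (⟨g, hg⟩ : H)⁻¹ y)
      have : π k y = y := hk1
      rw [hkH] at this
      simp only [map_mul, map_inv, Equiv.Perm.mul_apply] at this
      have := congrArg (π (⟨g, hg⟩ : H)⁻¹) this
      simpa using this
    · have hconj : g⁻¹ * (k : Γ) * g ∈ H := by
        rw [hkval]
        have : g⁻¹ * (g * (h : Γ) * g⁻¹) * g = (h : Γ) := by group
        rw [this]; exact h.2
      obtain ⟨ε, s, hs, hsig⟩ := hcond g hg (k : Γ) k.2 hconj
      set m : H := ⟨s, hs⟩⁻¹ * k * ⟨s, hs⟩ with hm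
      have hmval : (m : Γ) = s⁻¹ * (k : Γ) * s := rfl
      have hmem : (m : Γ) ∈ Sig ε := by rw [hmval]; exact hsig
      have hfix : π m (π (⟨s, hs⟩ : H)⁻¹ y) = π (⟨s, hs⟩ : H)⁻¹ y := by
        rw [hm]
        simp only [map_mul, map_inv, Equiv.Perm.mul_apply]
        simp [hk1]
      have hm1 : m = 1 := by
        by_contra hm1
        exact hfree ε m hmem hm1 _ hfix
      have hk1' : k = 1 := by
        have := hm1
        rw [hm] at this
        have : k = ⟨s, hs⟩ * (1 : H) * ⟨s, hs⟩⁻¹ := by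
          rw [← this]; group
        simpa using this
      have hh1 : h = 1 := by
        have : (k : Γ) = 1 := by rw [hk1']; rfl
        rw [hkval] at this
        have hΓ : (h : Γ) = 1 := by
          have := congrArg (fun z => g⁻¹ * z * g) this
          simpa [mul_assoc] using this
        ext; simpa using hΓ
      apply hh y
      rw [hh1]
      simp
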